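/- Define f(t) = 2e^{-t²/2} + e^{-t²} - 3·erfc(t/√2) for t ≥ 0, where erfc(u) = (2/√π)∫_u^∞ e^{-s²} ds. Then f(t) > 0 for all t > 0. -/

import Mathlib

open MeasureTheory Real

noncomputable def erfc (u : ℝ) : ℝ :=
  (2 / Real.sqrt Real.pi) * ∫ s in Set.Ioi u, Real.exp (-s ^ 2)

lemma gauss_integrableOn (u : ℝ) :
    IntegrableOn (fun s : ℝ => Real.exp (-s ^ 2)) (Set.Ioi u) := by
  have h := (integrable_exp_neg_mul_sq (b := 1) one_pos).integrableOn (s := Set.Ioi u)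
  simpa using h

lemma gauss_Ioi_zero : ∫ s in Set.Ioi (0:ℝ), Real.exp (-s ^ 2) = Real.sqrt Real.pi / 2 := by
  have h := integral_gaussian_Ioi 1
  simpa using h

lemma intA {u : ℝ} (hu : 0 ≤ u) :
    ∫ s in Set.Ioi u, Real.exp (-s ^ 2) ≤ Real.sqrt Real.pi / 2 - (u - u ^ 3 / 3) := by
  have hsplit : (∫ s in Set.Ioc (0:ℝ) u, Real.exp (-s ^ 2))
      + ∫ s in Set.Ioi u, Real.exp (-s ^ 2)
      = ∫ s in Set.Ioi (0:ℝ), Real.exp (-s ^ 2) := by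
    rw [← setIntegral_union (Set.Ioc_disjoint_Ioi le_rfl) measurableSet_Ioi
      ((gauss_integrableOn 0).mono_set Set.Ioc_subset_Ioi_self) (gauss_integrableOn u),
      Set.Ioc_union_Ioi_eq_Ioi hu]
  have hlow : u - u ^ 3 / 3 ≤ ∫ s in Set.Ioc (0:ℝ) u, Real.exp (-s ^ 2) := by
    have h1 : (∫ s in Set.Ioc (0:ℝ) u, (1 - s ^ 2)) = u - u ^ 3 / 3 := by
      rw [← intervalIntegral.integral_of_le hu,
        intervalIntegral.integral_sub intervalIntegrable_const (intervalIntegral.intervalIntegrable_pow 2),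
        integral_one, integral_pow]
      norm_num
    rw [← h1]
    refine setIntegral_mono_on ?_ ?_ measurableSet_Ioc fun s _ => ?_
    · exact (Continuous.integrableOn_Ioc (by continuity))
    · exact (gauss_integrableOn 0).mono_set Set.Ioc_subset_Ioi_self
    · simpa using Real.one_sub_le_exp_neg (s ^ 2)
  rw [gauss_Ioi_zero] at hsplit
  linarith

lemma intB {u : ℝ} (hu : 0 < u) :
    ∫ s in Set.Ioi u, Real.exp (-s ^ 2) ≤ Real.exp (-u ^ 2) / (2 * u) := by
  have hb : (0:ℝ) < 2 * u := by linarith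
  have hInt2 : IntegrableOn (fun s : ℝ => Real.exp (u ^ 2) * Real.exp (-(2 * u * s)))
      (Set.Ioi u) := by
    have h := (exp_neg_integrableOn_Ioi u hb).const_mul (Real.exp (u ^ 2))
    simpa [IntegrableOn, neg_mul, mul_assoc] using h
  have hmono : ∫ s in Set.Ioi u, Real.exp (-s ^ 2)
      ≤ ∫ s in Set.Ioi u, Real.exp (u ^ 2) * Real.exp (-(2 * u * s)) := by
    refine setIntegral_mono_on (gauss_integrableOn u) hInt2 measurableSet_Ioi fun s hs => ?_
    rw [← Real.exp_add]
    apply Real.exp_le_exp.2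
    have hsu : u < s := hs
    nlinarith [sq_nonneg (s - u)]
  have hcomp : ∫ s in Set.Ioi u, Real.exp (-(2 * u * s))
      = (2 * u)⁻¹ * Real.exp (-(2 * u * u)) := by
    have h := integral_comp_mul_left_Ioi (fun x => Real.exp (-x)) u hb
    simp only [smul_eq_mul] at h
    rw [h, integral_exp_neg_Ioi]
  have e : Real.exp (u ^ 2) * Real.exp (-(2 * u * u)) = Real.exp (-u ^ 2) := by
    rw [← Real.exp_add]; congr 1; ring
  have hval : ∫ s in Set.Ioi u, Real.exp (u ^ 2) * Real.exp (-(2 * u * s))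
      = Real.exp (-u ^ 2) / (2 * u) := by
    rw [integral_const_mul, hcomp, div_eq_mul_inv, ← e]; ring
  linarith [hmono, hval.le, hval.ge]

lemma exp_neg_taylor {x : ℝ} (h0 : 0 ≤ x) (h1 : x ≤ 1) :
    1 - x + x ^ 2 / 2 - (2/9) * x ^ 3 ≤ Real.exp (-x) := by
  have habs : |(-x)| ≤ 1 := by rwa [abs_neg, abs_of_nonneg h0]
  have h := Real.exp_bound habs (n := 3) (by norm_num)
  have hs : ∑ m ∈ Finset.range 3, (-x) ^ m / (m.factorial : ℝ) = 1 - x + x ^ 2 / 2 := by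
    simp [Finset.sum_range_succ]
    ring
  rw [hs, abs_neg, abs_of_nonneg h0] at h
  have h2 := (abs_sub_le_iff.1 h).2
  have h3 : ((Nat.factorial 3 : ℝ)) = 6 := by norm_num [Nat.factorial]
  rw [h3] at h2
  norm_num at h2
  linarith

lemma sqrt_pi_lb : 1.772453 ≤ Real.sqrt Real.pi := by
  rw [show (1.772453:ℝ) = Real.sqrt (1.772453 ^ 2) by
    rw [Real.sqrt_sq (by norm_num)]]
  exact Real.sqrt_le_sqrt (by nlinarith [Real.pi_gt_d6])

lemma sqrt_pi_ub : Real.sqrt Real.pi ≤ 1.772454 := by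
  rw [show (1.772454:ℝ) = Real.sqrt (1.772454 ^ 2) by
    rw [Real.sqrt_sq (by norm_num)]]
  exact Real.sqrt_le_sqrt (by nlinarith [Real.pi_lt_d6])

lemma sqrt_two_lb : 1.414213 ≤ Real.sqrt 2 := by
  rw [show (1.414213:ℝ) = Real.sqrt (1.414213 ^ 2) by
    rw [Real.sqrt_sq (by norm_num)]]
  exact Real.sqrt_le_sqrt (by norm_num)

lemma sqrt_two_ub : Real.sqrt 2 ≤ 1.414214 := by
  rw [show (1.414214:ℝ) = Real.sqrt (1.414214 ^ 2) by
    rw [Real.sqrt_sq (by norm_num)]]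
  exact Real.sqrt_le_sqrt (by norm_num)

set_option maxHeartbeats 1000000 in
private lemma poly1 {t : ℝ} (ht : 0 < t) (h1 : t ≤ 1) :
    0 < 2.3936*t - 2*t^2 - 0.399*t^3 + 0.75*t^4 - (5/18)*t^6 := by
  have i1 : 0 ≤ 1.9268 - 0.0732*t - (17/36)*t^2 := by nlinarith
  have i2 : 0 ≤ t*(1-t)*(1.9268 - 0.0732*t - (17/36)*t^2) :=
    mul_nonneg (mul_nonneg ht.le (by linarith)) i1
  have i3 : 0 ≤ t^4*(1-t^2) := mul_nonneg (by positivity) (by nlinarith)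
  nlinarith [i2, i3, ht]

set_option maxHeartbeats 1000000 in
private lemma poly2 {t : ℝ} (h1 : 1 ≤ t) (h2 : t ≤ 1.25) :
    0 < -1 + 2.3936*t - t^2 - 0.399*t^3 + 0.25*t^4 - (1/18)*t^6 := by
  nlinarith [sq_nonneg (t-1), sq_nonneg (1.25-t), mul_nonneg (sub_nonneg.2 h1) (sub_nonneg.2 h2),
    mul_nonneg (mul_nonneg (sub_nonneg.2 h1) (sub_nonneg.2 h1)) (sub_nonneg.2 h2),
    mul_nonneg (mul_nonneg (sub_nonneg.2 h1) (sub_nonneg.2 h2)) (sub_nonneg.2 h2),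
    sq_nonneg t, mul_nonneg (sub_nonneg.2 h1) (sq_nonneg t)]

set_option maxHeartbeats 1000000 in
/-- `f(t) = 2e^{-t²/2} + e^{-t²} - 3·erfc(t/√2)` is strictly positive for `t > 0`. -/
theorem stmt_6 :
    ∀ t : ℝ, 0 < t →
      0 < 2 * Real.exp (-t ^ 2 / 2) + Real.exp (-t ^ 2) - 3 * erfc (t / Real.sqrt 2) := by
  intro t ht
  have hσl := sqrt_pi_lb
  have hσu := sqrt_pi_ub
  have hτl := sqrt_two_lb
  have hτu := sqrt_two_ub
  set σ := Real.sqrt Real.pi with hσ_def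
  set τ := Real.sqrt 2 with hτ_def
  have hσpos : (0:ℝ) < σ := by linarith
  have hτpos : (0:ℝ) < τ := by linarith
  have hττ : τ ^ 2 = 2 := Real.sq_sqrt (by norm_num)
  set u := t / τ with hu_def
  have hupos : 0 < u := div_pos ht hτpos
  have hu2 : u ^ 2 = t ^ 2 / 2 := by rw [hu_def, div_pow, hττ]
  have hE : Real.exp (-u ^ 2) = Real.exp (-t ^ 2 / 2) := by rw [hu2]; ring_nf
  have herfc : erfc u = (2 / σ) * ∫ s in Set.Ioi u, Real.exp (-s ^ 2) := rfl
  have hτ3 : τ ^ 3 = 2 * τ := by rw [pow_succ, hττ]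
  have hDl : (2.506626:ℝ) ≤ σ * τ := by
    nlinarith [mul_nonneg (sub_nonneg.2 hσl) (sub_nonneg.2 hτl)]
  have hDu : σ * τ ≤ 2.50663 := by
    nlinarith [mul_nonneg (sub_nonneg.2 hσu) (sub_nonneg.2 hτu)]
  have hDpos : (0:ℝ) < σ * τ := by linarith
  rcases le_or_gt t 1.25 with hle | hgt
  · -- small/medium t
    have hIA := intA hupos.le
    have e1 : 3 * erfc u ≤ 3 * ((2 / σ) * (σ / 2 - (u - u ^ 3 / 3))) := by
      rw [herfc]
      have := mul_le_mul_of_nonneg_left hIA (le_of_lt (by positivity : (0:ℝ) < 2 / σ))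
      linarith
    have e2 : (3:ℝ) * ((2 / σ) * (σ / 2 - (u - u ^ 3 / 3)))
        = 3 - 6 * t / (σ * τ) + t ^ 3 / (σ * τ) := by
      rw [hu_def, div_pow, hτ3]
      field_simp
      ring
    have termA : 2.3936 * t ≤ 6 * t / (σ * τ) := by
      rw [le_div_iff₀ hDpos]
      nlinarith
    have termB : t ^ 3 / (σ * τ) ≤ 0.399 * t ^ 3 := by
      rw [div_le_iff₀ hDpos]
      nlinarith [pow_pos ht 3]
    have hkey : 3 * erfc u ≤ 3 - 2.3936 * t + 0.399 * t ^ 3 := by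
      rw [e2] at e1; linarith
    have hA : 1 - t ^ 2 / 2 + t ^ 4 / 8 - t ^ 6 / 36 ≤ Real.exp (-t ^ 2 / 2) := by
      have h := exp_neg_taylor (x := t ^ 2 / 2) (by positivity) (by nlinarith)
      rw [show -(t ^ 2 / 2) = -t ^ 2 / 2 by ring] at h
      nlinarith [h]
    rcases le_or_gt t 1 with hle1 | hgt1
    · have hB : 1 - t ^ 2 + t ^ 4 / 2 - (2/9) * t ^ 6 ≤ Real.exp (-t ^ 2) := by
        have h := exp_neg_taylor (x := t ^ 2) (by positivity) (by nlinarith)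
        nlinarith [h]
      have hp := poly1 ht hle1
      nlinarith [hkey, hA, hB, hp]
    · have hB : (0:ℝ) < Real.exp (-t ^ 2) := Real.exp_pos _
      have hp := poly2 hgt1.le hle
      nlinarith [hkey, hA, hB, hp]
  · -- large t
    have hIB := intB hupos
    have e1 : 3 * erfc u ≤ 3 * ((2 / σ) * (Real.exp (-u ^ 2) / (2 * u))) := by
      rw [herfc]
      have := mul_le_mul_of_nonneg_left hIB (le_of_lt (by positivity : (0:ℝ) < 2 / σ))
      linarith
    have e2 : (3:ℝ) * ((2 / σ) * (Real.exp (-u ^ 2) / (2 * u)))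
        = 3 * Real.exp (-t ^ 2 / 2) * τ / (σ * t) := by
      rw [hE, hu_def]
      field_simp
    have hbound : 3 * Real.exp (-t ^ 2 / 2) * τ / (σ * t) ≤ 1.916 * Real.exp (-t ^ 2 / 2) := by
      rw [div_le_iff₀ (by nlinarith : (0:ℝ) < σ * t)]
      have hEpos : (0:ℝ) < Real.exp (-t ^ 2 / 2) := Real.exp_pos _
      have h5 : 3 * τ ≤ 1.916 * (σ * t) := by
        nlinarith [mul_nonneg (sub_nonneg.2 hσl) (by linarith : (0:ℝ) ≤ t - 1.25)]
      nlinarith [mul_le_mul_of_nonneg_left h5 hEpos.le]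
    have hkey : 3 * erfc u ≤ 1.916 * Real.exp (-t ^ 2 / 2) := by
      rw [e2] at e1; linarith
    have hB : (0:ℝ) < Real.exp (-t ^ 2) := Real.exp_pos _
    have hApos : (0:ℝ) < Real.exp (-t ^ 2 / 2) := Real.exp_pos _
    linarith
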